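/- Let (x̄,λ̄) ∈ S_KKT(0,0), i.e., (x̄,λ̄) is a solution of the KKT system for the ENLP. Then S_KKT is isolatedly calm at ((0,0),(x̄,λ̄)) if and only if the following implication holds: whenever ξ ∈ ℝ^n and η ∈ ℝ^m satisfy ∇²_{xx}L(x̄,λ̄)ξ + ∇Φ(x̄)*η = 0 and η ∈ D(∂θ)(Φ(x̄),λ̄)(∇Φ(x̄)ξ), one has (ξ,η) = (0,0). -/

import Mathlib

open Filter Topology Metric Set Pointwise
open scoped RealInnerProductSpace

noncomputable section

/-- Euclidean space ℝ^k. -/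
abbrev Evec (k : ℕ) : Type := EuclideanSpace ℝ (Fin k)

/-- The Bouligand tangent cone to `Ω` at `z`: limits of `α_k (z_k - z)` with
`z_k → z` in `Ω` and `α_k ≥ 0`. -/
def bTangentCone {F : Type*} [NormedAddCommGroup F] [NormedSpace ℝ F]
    (Ω : Set F) (z : F) : Set F :=
  {w | ∃ (zs : ℕ → F) (a : ℕ → ℝ), (∀ k, zs k ∈ Ω) ∧ (∀ k, 0 ≤ a k) ∧
    Tendsto zs atTop (𝓝 z) ∧ Tendsto (fun k => a k • (zs k - z)) atTop (𝓝 w)}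

/-- Graph of a set-valued mapping. -/
def svGraph {A B : Type*} (F : A → Set B) : Set (A × B) := {p | p.2 ∈ F p.1}

/-- Graphical derivative of a set-valued mapping at `(z, w)` in direction `u`. -/
def gDeriv {A B : Type*} [NormedAddCommGroup A] [NormedSpace ℝ A]
    [NormedAddCommGroup B] [NormedSpace ℝ B]
    (F : A → Set B) (z : A) (w : B) (u : A) : Set B :=
  {v | (u, v) ∈ bTangentCone (svGraph F) (z, w)}

/-- A convex polyhedral set: a finite intersection of closed half-spaces. -/
def IsPolyhedral {k : ℕ} (Y : Set (Evec k)) : Prop :=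
  ∃ (p : ℕ) (b : Fin p → Evec k) (c : Fin p → ℝ), Y = {y | ∀ i, ⟪b i, y⟫ ≤ c i}

/-- The piecewise linear-quadratic penalty θ_{Y,B}. -/
def thetaY {k : ℕ} (Y : Set (Evec k)) (B : Evec k →L[ℝ] Evec k) (u : Evec k) : EReal :=
  ⨆ y ∈ Y, ((⟪y, u⟫ - (1 / 2) * ⟪y, B y⟫ : ℝ) : EReal)

/-- Subdifferential of convex analysis of an extended-real-valued function. -/
def subdiff {k : ℕ} (θ : Evec k → EReal) (z : Evec k) : Set (Evec k) :=
  {v | ∀ u, θ z + ((⟪v, u - z⟫ : ℝ) : EReal) ≤ θ u}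

/-- Polar cone. -/
def polarCone {k : ℕ} (K : Set (Evec k)) : Set (Evec k) :=
  {v | ∀ w ∈ K, ⟪v, w⟫ ≤ 0}

/-- Normal cone of convex analysis. -/
def convNormalCone {k : ℕ} (Ω : Set (Evec k)) (z : Evec k) : Set (Evec k) :=
  {v | ∀ w ∈ Ω, ⟪v, w - z⟫ ≤ 0}

/-- The critical cone K = T_Y(lmo) ∩ {zo - Blmo}^⊥. -/
def critCone {k : ℕ} (Y : Set (Evec k)) (B : Evec k →L[ℝ] Evec k)
    (zo lmo : Evec k) : Set (Evec k) :=
  bTangentCone Y lmo ∩ {w | ⟪zo - B lmo, w⟫ = 0}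

/-- Calmness of a set-valued mapping at a graph point. -/
def Calm {A B : Type*} [NormedAddCommGroup A] [NormedAddCommGroup B]
    (F : A → Set B) (zo : A) (wo : B) : Prop :=
  ∃ ℓ : ℝ, 0 ≤ ℓ ∧ ∃ U ∈ 𝓝 zo, ∃ V ∈ 𝓝 wo,
    ∀ z ∈ U, ∀ w ∈ F z ∩ V, ∃ w' ∈ F zo, ‖w - w'‖ ≤ ℓ * ‖z - zo‖

/-- Isolated calmness of a set-valued mapping at a graph point. -/
def IsolCalm {A B : Type*} [NormedAddCommGroup A] [NormedAddCommGroup B]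
    (F : A → Set B) (zo : A) (wo : B) : Prop :=
  ∃ ℓ : ℝ, 0 ≤ ℓ ∧ ∃ U ∈ 𝓝 zo, ∃ V ∈ 𝓝 wo,
    ∀ z ∈ U, ∀ w ∈ F z ∩ V, ‖w - wo‖ ≤ ℓ * ‖z - zo‖

/-- Robust isolated calmness of a set-valued mapping at a graph point. -/
def RobIsolCalm {A B : Type*} [NormedAddCommGroup A] [NormedAddCommGroup B]
    (F : A → Set B) (zo : A) (wo : B) : Prop :=
  ∃ ℓ : ℝ, 0 ≤ ℓ ∧ ∃ U ∈ 𝓝 zo, ∃ V ∈ 𝓝 wo,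
    (∀ z ∈ U, ∀ w ∈ F z ∩ V, ‖w - wo‖ ≤ ℓ * ‖z - zo‖) ∧
    ∀ z ∈ U, (F z ∩ V).Nonempty

/-- Lipschitz-like (Aubin) property of a set-valued mapping around a graph point. -/
def LipLike {A B : Type*} [NormedAddCommGroup A] [NormedAddCommGroup B]
    (F : A → Set B) (zo : A) (wo : B) : Prop :=
  ∃ ℓ : ℝ, 0 ≤ ℓ ∧ ∃ U ∈ 𝓝 zo, ∃ V ∈ 𝓝 wo,
    ∀ z ∈ U, ∀ z' ∈ U, ∀ w ∈ F z' ∩ V, ∃ w' ∈ F z, ‖w - w'‖ ≤ ℓ * ‖z' - z‖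

/-! ### The general variational system -/

/-- Ψ(x,λ) = f(x) + ∇Φ(x)*λ. -/
def Psi {n m : ℕ} (f : Evec n → Evec n) (Φ : Evec n → Evec m)
    (x : Evec n) (lam : Evec m) : Evec n :=
  f x + ContinuousLinearMap.adjoint (fderiv ℝ Φ x) lam

/-- Lagrange multipliers Λ(xo) of the variational system. -/
def LagMult {n m : ℕ} (Y : Set (Evec m)) (B : Evec m →L[ℝ] Evec m)
    (f : Evec n → Evec n) (Φ : Evec n → Evec m) (xo : Evec n) : Set (Evec m) :=
  {lam | Psi f Φ xo lam = 0 ∧ lam ∈ subdiff (thetaY Y B) (Φ xo)}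

/-- Solution map of the canonically perturbed variational system. -/
def SolMap {n m : ℕ} (Y : Set (Evec m)) (B : Evec m →L[ℝ] Evec m)
    (f : Evec n → Evec n) (Φ : Evec n → Evec m) :
    Evec n × Evec m → Set (Evec n × Evec m) :=
  fun p => {q | Psi f Φ q.1 q.2 = p.1 ∧ q.2 ∈ subdiff (thetaY Y B) (Φ q.1 + p.2)}

/-- Multiplier map associated with xo. -/
def MultMap {n m : ℕ} (Y : Set (Evec m)) (B : Evec m →L[ℝ] Evec m)
    (f : Evec n → Evec n) (Φ : Evec n → Evec m) (xo : Evec n) :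
    Evec n × Evec m → Set (Evec m) :=
  fun p => {lam | Psi f Φ xo lam = p.1 ∧ lam ∈ subdiff (thetaY Y B) (Φ xo + p.2)}

/-- lmo is a critical Lagrange multiplier for the variational system. -/
def IsCriticalMult {n m : ℕ} (Y : Set (Evec m)) (B : Evec m →L[ℝ] Evec m)
    (f : Evec n → Evec n) (Φ : Evec n → Evec m) (xo : Evec n) (lmo : Evec m) : Prop :=
  ∃ ξ : Evec n, ξ ≠ 0 ∧
    ∃ η ∈ gDeriv (subdiff (thetaY Y B)) (Φ xo) lmo (fderiv ℝ Φ xo ξ),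
      fderiv ℝ (fun x => Psi f Φ x lmo) xo ξ +
        ContinuousLinearMap.adjoint (fderiv ℝ Φ xo) η = 0

/-- lmo is a noncritical Lagrange multiplier for the variational system. -/
def IsNoncriticalMult {n m : ℕ} (Y : Set (Evec m)) (B : Evec m →L[ℝ] Evec m)
    (f : Evec n → Evec n) (Φ : Evec n → Evec m) (xo : Evec n) (lmo : Evec m) : Prop :=
  ∀ ξ : Evec n, ∀ η ∈ gDeriv (subdiff (thetaY Y B)) (Φ xo) lmo (fderiv ℝ Φ xo ξ),
    fderiv ℝ (fun x => Psi f Φ x lmo) xo ξ +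
      ContinuousLinearMap.adjoint (fderiv ℝ Φ xo) η = 0 → ξ = 0

/-- `u` is the proximal point of `θ` at `z`. -/
def IsProxPt {k : ℕ} (θ : Evec k → EReal) (z u : Evec k) : Prop :=
  ∀ w, θ u + ((1 / 2 * ‖z - u‖ ^ 2 : ℝ) : EReal) ≤ θ w + ((1 / 2 * ‖z - w‖ ^ 2 : ℝ) : EReal)

/-! ### ENLP -/

/-- The Lagrangian of the ENLP. -/
def Lag {n m : ℕ} (B : Evec m →L[ℝ] Evec m) (φ₀ : Evec n → ℝ) (Φ : Evec n → Evec m)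
    (x : Evec n) (lam : Evec m) : ℝ :=
  φ₀ x + ⟪Φ x, lam⟫ - (1 / 2) * ⟪lam, B lam⟫

/-- The essential objective φ = φ₀ + θ∘Φ of the ENLP. -/
def enlpPhi {n m : ℕ} (Y : Set (Evec m)) (B : Evec m →L[ℝ] Evec m)
    (φ₀ : Evec n → ℝ) (Φ : Evec n → Evec m) (x : Evec n) : EReal :=
  ((φ₀ x : ℝ) : EReal) + thetaY Y B (Φ x)

/-- Lagrange multipliers of the ENLP KKT system. -/
def LagMultCom {n m : ℕ} (Y : Set (Evec m)) (B : Evec m →L[ℝ] Evec m)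
    (φ₀ : Evec n → ℝ) (Φ : Evec n → Evec m) (xo : Evec n) : Set (Evec m) :=
  {lam | gradient (fun x => Lag B φ₀ Φ x lam) xo = 0 ∧
    lam ∈ subdiff (thetaY Y B) (Φ xo)}

/-- Solution map of the canonically perturbed KKT system of the ENLP. -/
def SKKT {n m : ℕ} (Y : Set (Evec m)) (B : Evec m →L[ℝ] Evec m)
    (φ₀ : Evec n → ℝ) (Φ : Evec n → Evec m) :
    Evec n × Evec m → Set (Evec n × Evec m) :=
  fun p => {q | gradient (fun x => Lag B φ₀ Φ x q.2) q.1 = p.1 ∧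
    q.2 ∈ subdiff (thetaY Y B) (Φ q.1 + p.2)}

/-- The Hessian ∇²_{xx}L(xo,lmo) as a continuous linear map. -/
def hessL {n m : ℕ} (B : Evec m →L[ℝ] Evec m) (φ₀ : Evec n → ℝ) (Φ : Evec n → Evec m)
    (xo : Evec n) (lmo : Evec m) : Evec n →L[ℝ] Evec n :=
  fderiv ℝ (fun x => gradient (fun x' => Lag B φ₀ Φ x' lmo) x) xo

/-- lmo is a noncritical multiplier of the KKT system of the ENLP. -/
def IsNoncriticalENLP {n m : ℕ} (Y : Set (Evec m)) (B : Evec m →L[ℝ] Evec m)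
    (φ₀ : Evec n → ℝ) (Φ : Evec n → Evec m) (xo : Evec n) (lmo : Evec m) : Prop :=
  ∀ ξ : Evec n, ∀ η ∈ gDeriv (subdiff (thetaY Y B)) (Φ xo) lmo (fderiv ℝ Φ xo ξ),
    hessL B φ₀ Φ xo lmo ξ + ContinuousLinearMap.adjoint (fderiv ℝ Φ xo) η = 0 → ξ = 0

/-- The second-order sufficient condition for the ENLP at (xo,lmo). -/
def SOSC {n m : ℕ} (Y : Set (Evec m)) (B : Evec m →L[ℝ] Evec m)
    (φ₀ : Evec n → ℝ) (Φ : Evec n → Evec m) (xo : Evec n) (lmo : Evec m) : Prop :=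
  ∀ w : Evec n, w ≠ 0 →
    fderiv ℝ Φ xo w ∈ polarCone (critCone Y B (Φ xo) lmo) + Set.range (⇑B) →
    0 < ((⟪hessL B φ₀ Φ xo lmo w, w⟫ : ℝ) : EReal) +
      2 * thetaY (critCone Y B (Φ xo) lmo) B (fderiv ℝ Φ xo w)

/-- xo is a local optimal solution of the ENLP. -/
def IsLocalOptENLP {n m : ℕ} (Y : Set (Evec m)) (B : Evec m →L[ℝ] Evec m)
    (φ₀ : Evec n → ℝ) (Φ : Evec n → Evec m) (xo : Evec n) : Prop :=
  ∃ ε > (0 : ℝ), ∀ x ∈ Metric.closedBall xo ε,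
    enlpPhi Y B φ₀ Φ xo ≤ enlpPhi Y B φ₀ Φ x

/-- The second subderivative d²φ(xo,vo)(wo). -/
def secondSubderiv {k : ℕ} (φ : Evec k → EReal) (xo vo wo : Evec k) : EReal :=
  Filter.liminf
    (fun p : ℝ × Evec k =>
      ((2 / p.1 ^ 2 : ℝ) : EReal) *
        (φ (xo + p.1 • p.2) - φ xo - ((p.1 * ⟪vo, p.2⟫ : ℝ) : EReal)))
    ((𝓝[>] (0 : ℝ)) ×ˢ 𝓝 wo)

/-- The perturbed objective of the ENLP. -/
def pObj {n m : ℕ} (Y : Set (Evec m)) (B : Evec m →L[ℝ] Evec m)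
    (φ₀ : Evec n → ℝ) (Φ : Evec n → Evec m) (p : Evec n × Evec m) (x : Evec n) : EReal :=
  ((φ₀ x - ⟪p.1, x⟫ : ℝ) : EReal) + thetaY Y B (Φ x + p.2)

/-- xo is a fully stable local optimal solution of the ENLP. -/
def FullyStable {n m : ℕ} (Y : Set (Evec m)) (B : Evec m →L[ℝ] Evec m)
    (φ₀ : Evec n → ℝ) (Φ : Evec n → Evec m) (xo : Evec n) : Prop :=
  ∃ γ > (0 : ℝ), ∃ U ∈ 𝓝 (0 : Evec n), ∃ W ∈ 𝓝 (0 : Evec m),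
    ∃ (g : Evec n × Evec m → Evec n) (mg : Evec n × Evec m → ℝ) (ℓ : ℝ), 0 ≤ ℓ ∧
      g (0, 0) = xo ∧
      (∀ p ∈ U ×ˢ W,
        {x : Evec n | ‖x - xo‖ ≤ γ ∧ ∀ x', ‖x' - xo‖ ≤ γ →
          pObj Y B φ₀ Φ p x ≤ pObj Y B φ₀ Φ p x'} = {g p}) ∧
      (∀ p ∈ U ×ˢ W, ∀ q ∈ U ×ˢ W, ‖g p - g q‖ ≤ ℓ * ‖p - q‖) ∧
      (∀ p ∈ U ×ˢ W,
        sInf (pObj Y B φ₀ Φ p '' {x | ‖x - xo‖ ≤ γ}) = ((mg p : ℝ) : EReal)) ∧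
      (∀ p ∈ U ×ˢ W, ∀ q ∈ U ×ˢ W, |mg p - mg q| ≤ ℓ * ‖p - q‖)

/-! ### Normal cones and coderivatives on products -/

/-- Regular (Fréchet) normal cone to a subset of ℝ^a × ℝ^b. -/
def regNormalCone2 {a b : ℕ} (Ω : Set (Evec a × Evec b)) (z : Evec a × Evec b) :
    Set (Evec a × Evec b) :=
  {v | ∀ ε > (0 : ℝ), ∃ δ > (0 : ℝ), ∀ w ∈ Ω, ‖w - z‖ < δ →
    ⟪v.1, w.1 - z.1⟫ + ⟪v.2, w.2 - z.2⟫ ≤ ε * ‖w - z‖}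

/-- Limiting (Mordukhovich) normal cone to a subset of ℝ^a × ℝ^b. -/
def limNormalCone2 {a b : ℕ} (Ω : Set (Evec a × Evec b)) (z : Evec a × Evec b) :
    Set (Evec a × Evec b) :=
  {v | ∃ (zs vs : ℕ → Evec a × Evec b), (∀ k, zs k ∈ Ω) ∧
    (∀ k, vs k ∈ regNormalCone2 Ω (zs k)) ∧
    Tendsto zs atTop (𝓝 z) ∧ Tendsto vs atTop (𝓝 v)}

/-- Coderivative of a set-valued mapping between Euclidean spaces. -/
def coDeriv {a b : ℕ} (F : Evec a → Set (Evec b)) (z : Evec a) (w : Evec b)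
    (v : Evec b) : Set (Evec a) :=
  {u | (u, -v) ∈ limNormalCone2 (svGraph F) (z, w)}

end

/-! ### Auxiliary lemmas for the proof -/

section Aux

open ContinuousLinearMap

/-- Workhorse: scaled difference quotients along a sequence converge to the derivative. -/
lemma deriv_limit {E F : Type*} [NormedAddCommGroup E] [NormedSpace ℝ E]
    [NormedAddCommGroup F] [NormedSpace ℝ F] {G : E → F} {D : E →L[ℝ] F} {z : E}
    (hG : HasFDerivAt G D z) {q : ℕ → E} {a : ℕ → ℝ} {w : E}
    (hq : Tendsto q atTop (𝓝 z))
    (hw : Tendsto (fun k => a k • (q k - z)) atTop (𝓝 w)) :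
    Tendsto (fun k => a k • (G (q k) - G z)) atTop (𝓝 (D w)) := by
  have h1 : Tendsto (fun k => a k • (D (q k - z))) atTop (𝓝 (D w)) := by
    have h := (D.continuous.tendsto w).comp hw
    exact h.congr fun k => by simp [Function.comp]
  have h2 : Tendsto (fun k => a k • (G (q k) - G z - D (q k - z))) atTop (𝓝 0) := by
    -- bound: |a k| * ‖q k - z‖ is eventually bounded
    have hbd : ∀ᶠ k in atTop, |a k| * ‖q k - z‖ ≤ ‖w‖ + 1 := by
      have := hw.norm
      have h := this.eventually_le_const (lt_add_one ‖w‖)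
      filter_upwards [h] with k hk
      simpa [norm_smul, abs_of_nonneg, Real.norm_eq_abs] using hk
    have hlo : (fun k => G (q k) - G z - D (q k - z)) =o[atTop] fun k => q k - z :=
      (hG.isLittleO).comp_tendsto hq
    rw [NormedAddCommGroup.tendsto_nhds_zero]
    intro ε hε
    have hc : (0:ℝ) < ε / (2 * (‖w‖ + 1)) := by positivity
    filter_upwards [hlo.def hc, hbd] with k hk1 hk2
    have : ‖a k • (G (q k) - G z - D (q k - z))‖ ≤ ε / (2 * (‖w‖ + 1)) * (|a k| * ‖q k - z‖) := by
      rw [norm_smul, Real.norm_eq_abs]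
      calc |a k| * ‖G (q k) - G z - D (q k - z)‖
          ≤ |a k| * (ε / (2 * (‖w‖ + 1)) * ‖q k - z‖) := by
            exact mul_le_mul_of_nonneg_left hk1 (abs_nonneg _)
        _ = ε / (2 * (‖w‖ + 1)) * (|a k| * ‖q k - z‖) := by ring
    have h2' : ε / (2 * (‖w‖ + 1)) * (|a k| * ‖q k - z‖) ≤ ε / (2 * (‖w‖ + 1)) * (‖w‖ + 1) := by
      exact mul_le_mul_of_nonneg_left hk2 (le_of_lt hc)
    have h3 : ε / (2 * (‖w‖ + 1)) * (‖w‖ + 1) < ε := by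
      have hw1 : (0:ℝ) < ‖w‖ + 1 := by positivity
      rw [div_mul_eq_mul_div, mul_comm (2 : ℝ), mul_div_assoc]
      calc ε * ((‖w‖ + 1) / ((‖w‖ + 1) * 2)) = ε * (1/2) := by
            rw [div_mul_eq_div_div, div_self (ne_of_gt hw1)]
        _ < ε := by linarith
    exact lt_of_le_of_lt (this.trans h2') h3
  have : (fun k => a k • (G (q k) - G z)) =
      fun k => a k • (D (q k - z)) + a k • (G (q k) - G z - D (q k - z)) := by
    funext k
    rw [← smul_add]
    congr 1
    abel
  rw [this]
  simpa using h1.add h2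

/-- If `t → 0` and `t⁻¹ • f` converges, then `f → 0`. -/
lemma tendsto_zero_of_scaled {E : Type*} [NormedAddCommGroup E] [NormedSpace ℝ E]
    {f : ℕ → E} {t : ℕ → ℝ} {w : E} (ht0 : ∀ k, t k ≠ 0)
    (ht : Tendsto t atTop (𝓝 0))
    (h : Tendsto (fun k => (t k)⁻¹ • f k) atTop (𝓝 w)) :
    Tendsto f atTop (𝓝 0) := by
  have := ht.smul h
  simp only [zero_smul] at this
  have heq : (fun k => t k • (t k)⁻¹ • f k) = f := by
    funext k
    rw [smul_inv_smul₀ (ht0 k)]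
  rwa [heq] at this

end Aux
section Aux2

open ContinuousLinearMap

/-- The joint KKT residual map `G(x,λ) = ∇φ₀(x) + ∇Φ(x)*λ`. -/
noncomputable def Gmap {n m : ℕ} (φ₀ : Evec n → ℝ) (Φ : Evec n → Evec m)
    (q : Evec n × Evec m) : Evec n :=
  gradient φ₀ q.1 + adjoint (fderiv ℝ Φ q.1) q.2

lemma adjoint_IBLM {n m : ℕ} : IsBoundedLinearMap ℝ
    (fun T : Evec n →L[ℝ] Evec m => adjoint T) := by
  refine ⟨⟨fun a b => map_add _ a b, fun c T => ?_⟩, 1, one_pos, fun T => ?_⟩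
  · rw [LinearIsometryEquiv.map_smulₛₗ adjoint]; simp
  · rw [one_mul]
    exact le_of_eq (LinearIsometryEquiv.norm_map adjoint T)

lemma grad_Lag_eq {n m : ℕ} (B : Evec m →L[ℝ] Evec m) (φ₀ : Evec n → ℝ)
    (hφ₀ : ContDiff ℝ 2 φ₀) (Φ : Evec n → Evec m) (hΦ : ContDiff ℝ 2 Φ)
    (x : Evec n) (lam : Evec m) :
    gradient (fun x' => Lag B φ₀ Φ x' lam) x = Gmap φ₀ Φ (x, lam) := by
  have hφd : HasFDerivAt φ₀ (fderiv ℝ φ₀ x) x :=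
    (hφ₀.differentiable two_ne_zero x).hasFDerivAt
  have hΦd : HasFDerivAt Φ (fderiv ℝ Φ x) x :=
    (hΦ.differentiable two_ne_zero x).hasFDerivAt
  have h2 : HasFDerivAt (fun x' => (⟪Φ x', lam⟫ : ℝ))
      ((innerSL ℝ lam).comp (fderiv ℝ Φ x)) x := by
    have heq : (fun x' => (⟪Φ x', lam⟫ : ℝ)) = fun x' => innerSL ℝ lam (Φ x') := by
      funext x'
      simp only [innerSL_apply_apply]
      exact real_inner_comm _ _
    rw [heq]
    exact ((innerSL ℝ lam).hasFDerivAt).comp x hΦd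
  have hL : HasFDerivAt (fun x' => Lag B φ₀ Φ x' lam)
      (fderiv ℝ φ₀ x + (innerSL ℝ lam).comp (fderiv ℝ Φ x)) x := by
    have h := (hφd.add h2).sub_const ((1/2) * (⟪lam, B lam⟫ : ℝ))
    simpa [Lag] using h
  have hg : HasGradientAt (fun x' => Lag B φ₀ Φ x' lam) (Gmap φ₀ Φ (x, lam)) x := by
    rw [hasGradientAt_iff_hasFDerivAt]
    refine hL.congr_fderiv ?_
    apply ContinuousLinearMap.ext
    intro ξ
    simp only [InnerProductSpace.toDual_apply_apply, Gmap, gradient, inner_add_left,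
      ContinuousLinearMap.add_apply, ContinuousLinearMap.coe_comp', Function.comp_apply,
      innerSL_apply_apply, adjoint_inner_left, InnerProductSpace.toDual_symm_apply]
  exact hg.gradient

end Aux2
section Aux3

open ContinuousLinearMap

lemma toDualSymm_IBLM {n : ℕ} : IsBoundedLinearMap ℝ
    (fun d : StrongDual ℝ (Evec n) => (InnerProductSpace.toDual ℝ (Evec n)).symm d) := by
  refine ⟨⟨fun a b => map_add _ a b, fun c T => ?_⟩, 1, one_pos, fun T => ?_⟩
  · rw [LinearIsometryEquiv.map_smulₛₗ]; simp
  · rw [one_mul]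
    exact le_of_eq (LinearIsometryEquiv.norm_map _ T)

lemma Gmap_diff {n m : ℕ} (φ₀ : Evec n → ℝ) (Φ : Evec n → Evec m)
    (hφ₀ : ContDiff ℝ 2 φ₀) (hΦ : ContDiff ℝ 2 Φ) :
    Differentiable ℝ (Gmap φ₀ Φ) := by
  have hgrad : Differentiable ℝ (fun x : Evec n => gradient φ₀ x) := by
    have hf : ContDiff ℝ 1 (fderiv ℝ φ₀) := hφ₀.fderiv_right (by norm_num)
    exact toDualSymm_IBLM.differentiable.comp (hf.differentiable one_ne_zero)
  have hadjA : Differentiable ℝ (fun x : Evec n => adjoint (fderiv ℝ Φ x)) := by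
    have hf : ContDiff ℝ 1 (fderiv ℝ Φ) := hΦ.fderiv_right (by norm_num)
    exact adjoint_IBLM.differentiable.comp (hf.differentiable one_ne_zero)
  intro q
  have h1 : DifferentiableAt ℝ (fun q : Evec n × Evec m => gradient φ₀ q.1) q :=
    (hgrad q.1).comp q differentiableAt_fst
  have h2 : DifferentiableAt ℝ (fun q : Evec n × Evec m => adjoint (fderiv ℝ Φ q.1) q.2) q := by
    have hb : DifferentiableAt ℝ
        (fun p : (Evec m →L[ℝ] Evec n) × Evec m => p.1 p.2)
        (adjoint (fderiv ℝ Φ q.1), q.2) :=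
      isBoundedBilinearMap_apply.differentiableAt _
    have hinner : DifferentiableAt ℝ
        (fun q : Evec n × Evec m => ((adjoint (fderiv ℝ Φ q.1) : Evec m →L[ℝ] Evec n), q.2)) q :=
      DifferentiableAt.prodMk ((hadjA q.1).comp q differentiableAt_fst) differentiableAt_snd
    exact DifferentiableAt.comp (g := fun p : (Evec m →L[ℝ] Evec n) × Evec m => p.1 p.2)
      (f := fun q : Evec n × Evec m => ((adjoint (fderiv ℝ Φ q.1) : Evec m →L[ℝ] Evec n), q.2))
      q hb hinner
  exact h1.add h2

lemma Gmap_deriv {n m : ℕ} (Y : Set (Evec m)) (B : Evec m →L[ℝ] Evec m)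
    (φ₀ : Evec n → ℝ) (Φ : Evec n → Evec m)
    (hφ₀ : ContDiff ℝ 2 φ₀) (hΦ : ContDiff ℝ 2 Φ) (xo : Evec n) (lmo : Evec m) :
    ∃ D : (Evec n × Evec m) →L[ℝ] Evec n,
      HasFDerivAt (Gmap φ₀ Φ) D (xo, lmo) ∧
      ∀ ξ η, D (ξ, η) = hessL B φ₀ Φ xo lmo ξ + adjoint (fderiv ℝ Φ xo) η := by
  have hD : HasFDerivAt (Gmap φ₀ Φ) (fderiv ℝ (Gmap φ₀ Φ) (xo, lmo)) (xo, lmo) :=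
    (Gmap_diff φ₀ Φ hφ₀ hΦ (xo, lmo)).hasFDerivAt
  set D := fderiv ℝ (Gmap φ₀ Φ) (xo, lmo) with hDdef
  refine ⟨D, hD, fun ξ η => ?_⟩
  -- partial derivative in x is hessL
  have hincl1 : HasFDerivAt (fun x : Evec n => (x, lmo))
      ((ContinuousLinearMap.id ℝ (Evec n)).prod 0) xo :=
    (hasFDerivAt_id xo).prodMk (hasFDerivAt_const lmo xo)
  have hpart1 : HasFDerivAt (fun x => Gmap φ₀ Φ (x, lmo))
      (D.comp ((ContinuousLinearMap.id ℝ (Evec n)).prod 0)) xo :=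
    HasFDerivAt.comp (g := Gmap φ₀ Φ) (f := fun x : Evec n => (x, lmo)) xo hD hincl1
  have hhess : hessL B φ₀ Φ xo lmo = D.comp ((ContinuousLinearMap.id ℝ (Evec n)).prod 0) := by
    have hfun : (fun x => gradient (fun x' => Lag B φ₀ Φ x' lmo) x)
        = fun x => Gmap φ₀ Φ (x, lmo) :=
      funext fun x => grad_Lag_eq B φ₀ hφ₀ Φ hΦ x lmo
    rw [hessL, hfun]
    exact hpart1.fderiv
  -- partial derivative in λ is the adjoint
  have hincl2 : HasFDerivAt (fun lam : Evec m => (xo, lam))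
      ((0 : Evec m →L[ℝ] Evec n).prod (ContinuousLinearMap.id ℝ (Evec m))) lmo :=
    (hasFDerivAt_const xo lmo).prodMk (hasFDerivAt_id lmo)
  have hpart2 : HasFDerivAt (fun lam => Gmap φ₀ Φ (xo, lam))
      (D.comp ((0 : Evec m →L[ℝ] Evec n).prod (ContinuousLinearMap.id ℝ (Evec m)))) lmo :=
    HasFDerivAt.comp (g := Gmap φ₀ Φ) (f := fun lam : Evec m => (xo, lam)) lmo hD hincl2
  have hpart2' : HasFDerivAt (fun lam => Gmap φ₀ Φ (xo, lam))
      (adjoint (fderiv ℝ Φ xo)) lmo := by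
    have : (fun lam => Gmap φ₀ Φ (xo, lam))
        = fun lam => gradient φ₀ xo + adjoint (fderiv ℝ Φ xo) lam := rfl
    rw [this]
    exact (adjoint (fderiv ℝ Φ xo)).hasFDerivAt.const_add _
  have hadj : adjoint (fderiv ℝ Φ xo)
      = D.comp ((0 : Evec m →L[ℝ] Evec n).prod (ContinuousLinearMap.id ℝ (Evec m))) :=
    hpart2'.unique hpart2
  have hsplit : (ξ, η) = ((ξ, 0) : Evec n × Evec m) + (0, η) := by
    simp
  rw [hsplit, map_add, hhess, hadj]
  simp

end Aux3
section Aux4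

open ContinuousLinearMap

/-- Main estimate: a sequence in the graph of `∂θ` compatible with `(ξ,η)` plus
isolated calmness forces `(ξ,η) = 0`. -/
lemma main_est {n m : ℕ} (Y : Set (Evec m)) (B : Evec m →L[ℝ] Evec m)
    (φ₀ : Evec n → ℝ) (hφ₀ : ContDiff ℝ 2 φ₀)
    (Φ : Evec n → Evec m) (hΦ : ContDiff ℝ 2 Φ)
    (xo : Evec n) (lmo : Evec m)
    (hkkt : (xo, lmo) ∈ SKKT Y B φ₀ Φ ((0, 0) : Evec n × Evec m))
    (ξ : Evec n) (η : Evec m)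
    (h1 : hessL B φ₀ Φ xo lmo ξ + ContinuousLinearMap.adjoint (fderiv ℝ Φ xo) η = 0)
    (t : ℕ → ℝ) (ht0 : ∀ k, 0 < t k) (htlim : Tendsto t atTop (𝓝 0))
    (zs ls : ℕ → Evec m) (hmem : ∀ k, ls k ∈ subdiff (thetaY Y B) (zs k))
    (hz : Tendsto (fun k => (t k)⁻¹ • (zs k - Φ xo)) atTop (𝓝 (fderiv ℝ Φ xo ξ)))
    (hlm : Tendsto (fun k => (t k)⁻¹ • (ls k - lmo)) atTop (𝓝 η))
    (hic : IsolCalm (SKKT Y B φ₀ Φ) ((0,0) : Evec n × Evec m) (xo, lmo)) :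
    ξ = 0 ∧ η = 0 := by
  have htne : ∀ k, t k ≠ 0 := fun k => ne_of_gt (ht0 k)
  have hzs : Tendsto zs atTop (𝓝 (Φ xo)) := by
    have := tendsto_zero_of_scaled htne htlim hz
    rwa [← tendsto_sub_nhds_zero_iff]
  have hls : Tendsto ls atTop (𝓝 lmo) := by
    have := tendsto_zero_of_scaled htne htlim hlm
    rwa [← tendsto_sub_nhds_zero_iff]
  set x : ℕ → Evec n := fun k => xo + t k • ξ with hxdef
  have hx : Tendsto x atTop (𝓝 xo) := by
    have h0 : Tendsto (fun k => t k • ξ) atTop (𝓝 ((0:ℝ) • ξ)) := htlim.smul_const ξ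
    rw [zero_smul] at h0
    simpa using tendsto_const_nhds.add h0
  have hΦd : HasFDerivAt Φ (fderiv ℝ Φ xo) xo :=
    (hΦ.differentiable two_ne_zero xo).hasFDerivAt
  have hxq : Tendsto (fun k => (t k)⁻¹ • (x k - xo)) atTop (𝓝 ξ) := by
    have : (fun k => (t k)⁻¹ • (x k - xo)) = fun _ => ξ := by
      funext k
      rw [hxdef]
      simp only [add_sub_cancel_left]
      rw [inv_smul_smul₀ (htne k)]
    rw [this]
    exact tendsto_const_nhds
  have hΦx : Tendsto (fun k => (t k)⁻¹ • (Φ (x k) - Φ xo)) atTop (𝓝 (fderiv ℝ Φ xo ξ)) :=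
    deriv_limit hΦd hx hxq
  set q : ℕ → Evec n × Evec m := fun k => (x k, ls k) with hqdef
  have hq : Tendsto q atTop (𝓝 (xo, lmo)) := hx.prodMk_nhds hls
  have hqs : Tendsto (fun k => (t k)⁻¹ • (q k - (xo, lmo))) atTop (𝓝 (ξ, η)) := by
    have heq : (fun k => (t k)⁻¹ • (q k - (xo, lmo)))
        = fun k => ((t k)⁻¹ • (x k - xo), (t k)⁻¹ • (ls k - lmo)) := by
      funext k; rfl
    rw [heq]
    exact hxq.prodMk_nhds hlm
  obtain ⟨D, hD, hDval⟩ := Gmap_deriv Y B φ₀ Φ hφ₀ hΦ xo lmo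
  have hG0 : Gmap φ₀ Φ (xo, lmo) = 0 := by
    have h := hkkt.1
    rwa [grad_Lag_eq B φ₀ hφ₀ Φ hΦ xo lmo] at h
  set p : ℕ → Evec n × Evec m := fun k => (Gmap φ₀ Φ (q k), zs k - Φ (x k)) with hpdef
  have hmemS : ∀ k, q k ∈ SKKT Y B φ₀ Φ (p k) := by
    intro k
    constructor
    · exact grad_Lag_eq B φ₀ hφ₀ Φ hΦ (x k) (ls k)
    · show ls k ∈ subdiff (thetaY Y B) (Φ (x k) + (zs k - Φ (x k)))
      rw [add_sub_cancel]
      exact hmem k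
  have hp1 : Tendsto (fun k => (t k)⁻¹ • Gmap φ₀ Φ (q k)) atTop (𝓝 0) := by
    have := deriv_limit hD hq hqs
    rw [hG0] at this
    simp only [sub_zero] at this
    have hval : D (ξ, η) = 0 := by rw [hDval ξ η]; exact h1
    rwa [hval] at this
  have hp2 : Tendsto (fun k => (t k)⁻¹ • (zs k - Φ (x k))) atTop (𝓝 0) := by
    have heq : (fun k => (t k)⁻¹ • (zs k - Φ (x k)))
        = fun k => (t k)⁻¹ • (zs k - Φ xo) - (t k)⁻¹ • (Φ (x k) - Φ xo) := by
      funext k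
      rw [← smul_sub]
      congr 1
      abel
    rw [heq]
    simpa using hz.sub hΦx
  have hps : Tendsto (fun k => (t k)⁻¹ • (p k - ((0,0) : Evec n × Evec m))) atTop
      (𝓝 (0 : Evec n × Evec m)) := by
    have heq : (fun k => (t k)⁻¹ • (p k - ((0,0) : Evec n × Evec m)))
        = fun k => ((t k)⁻¹ • Gmap φ₀ Φ (q k), (t k)⁻¹ • (zs k - Φ (x k))) := by
      funext k
      simp [hpdef]
    rw [heq]
    exact hp1.prodMk_nhds hp2
  have hp0 : Tendsto p atTop (𝓝 ((0,0) : Evec n × Evec m)) := by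
    have := tendsto_zero_of_scaled (f := fun k => p k - ((0,0) : Evec n × Evec m))
      htne htlim hps
    have h2 := this.add_const ((0,0) : Evec n × Evec m)
    simpa using h2
  obtain ⟨ℓ, hℓ0, U, hU, V, hV, hcalm⟩ := hic
  have hpU : ∀ᶠ k in atTop, p k ∈ U := hp0.eventually_mem hU
  have hqV : ∀ᶠ k in atTop, q k ∈ V := hq.eventually_mem hV
  have hev : ∀ᶠ k in atTop, ‖(t k)⁻¹ • (q k - (xo, lmo))‖
      ≤ ℓ * ‖(t k)⁻¹ • (p k - ((0,0) : Evec n × Evec m))‖ := by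
    filter_upwards [hpU, hqV] with k hk1 hk2
    have hce := hcalm (p k) hk1 (q k) ⟨hmemS k, hk2⟩
    have htinv : (0:ℝ) < (t k)⁻¹ := inv_pos.mpr (ht0 k)
    rw [norm_smul, norm_smul, Real.norm_eq_abs, abs_of_pos htinv]
    have h3 := mul_le_mul_of_nonneg_left hce (le_of_lt htinv)
    nlinarith [h3]
  have l1 : Tendsto (fun k => ‖(t k)⁻¹ • (q k - (xo, lmo))‖) atTop
      (𝓝 ‖((ξ, η) : Evec n × Evec m)‖) := hqs.norm
  have l2 : Tendsto (fun k => ℓ * ‖(t k)⁻¹ • (p k - ((0,0) : Evec n × Evec m))‖) atTop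
      (𝓝 (ℓ * ‖(0 : Evec n × Evec m)‖)) := hps.norm.const_mul ℓ
  rw [norm_zero, mul_zero] at l2
  have hfin : ‖((ξ, η) : Evec n × Evec m)‖ ≤ 0 := le_of_tendsto_of_tendsto l1 l2 hev
  have hz0 : ((ξ, η) : Evec n × Evec m) = 0 := norm_le_zero_iff.mp hfin
  exact ⟨congrArg Prod.fst hz0, congrArg Prod.snd hz0⟩

end Aux4
/-- Graphical-derivative characterization of isolated calmness of the KKT solution map. -/
theorem isolatedCalm_characterization {n m : ℕ} (Y : Set (Evec m)) (hYne : Y.Nonempty) (hYpoly : IsPolyhedral Y)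
    (B : Evec m →L[ℝ] Evec m) (hBsym : ∀ u v : Evec m, ⟪B u, v⟫ = ⟪u, B v⟫)
    (hBpsd : ∀ u : Evec m, 0 ≤ ⟪u, B u⟫)
    (φ₀ : Evec n → ℝ) (hφ₀ : ContDiff ℝ 2 φ₀)
    (Φ : Evec n → Evec m) (hΦ : ContDiff ℝ 2 Φ)
    (xo : Evec n) (lmo : Evec m)
    (hkkt : (xo, lmo) ∈ SKKT Y B φ₀ Φ ((0, 0) : Evec n × Evec m)) :
    IsolCalm (SKKT Y B φ₀ Φ) ((0, 0) : Evec n × Evec m) (xo, lmo) ↔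
      ∀ (ξ : Evec n) (η : Evec m),
        (hessL B φ₀ Φ xo lmo ξ + ContinuousLinearMap.adjoint (fderiv ℝ Φ xo) η = 0 ∧
          η ∈ gDeriv (subdiff (thetaY Y B)) (Φ xo) lmo (fderiv ℝ Φ xo ξ)) →
        ξ = 0 ∧ η = 0 := by
  constructor
  · -- isolated calmness implies the implication
    rintro hic ξ η ⟨h1, h2⟩
    obtain ⟨ws, a, hwmem, ha0, hwlim, hslim⟩ := h2
    by_cases hA : Tendsto a atTop atTop
    · -- a → ∞ : use t k = (a (k+N))⁻¹
      obtain ⟨N, hN⟩ := Filter.eventually_atTop.mp (hA.eventually_ge_atTop 1)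
      have haN : ∀ k : ℕ, (1:ℝ) ≤ a (k + N) := fun k => hN _ (Nat.le_add_left N k)
      have haNpos : ∀ k : ℕ, (0:ℝ) < a (k + N) := fun k => lt_of_lt_of_le one_pos (haN k)
      have ht0 : ∀ k : ℕ, (0:ℝ) < (a (k + N))⁻¹ := fun k => inv_pos.mpr (haNpos k)
      have htlim : Tendsto (fun k => (a (k + N))⁻¹) atTop (𝓝 (0:ℝ)) :=
        tendsto_inv_atTop_zero.comp (hA.comp (tendsto_add_atTop_nat N))
      have hssub : Tendsto (fun k => a (k + N) • (ws (k + N) - (Φ xo, lmo))) atTop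
          (𝓝 (fderiv ℝ Φ xo ξ, η)) := hslim.comp (tendsto_add_atTop_nat N)
      have hwsub : Tendsto (fun k => ws (k + N)) atTop (𝓝 (Φ xo, lmo)) :=
        hwlim.comp (tendsto_add_atTop_nat N)
      refine main_est Y B φ₀ hφ₀ Φ hΦ xo lmo hkkt ξ η h1 (fun k => (a (k + N))⁻¹) ht0 htlim
        (fun k => (ws (k + N)).1) (fun k => (ws (k + N)).2) (fun k => hwmem (k + N)) ?_ ?_ hic
      · have h := (continuous_fst.tendsto _).comp hssub
        have heq : (fun k => (a (k + N) • (ws (k + N) - (Φ xo, lmo))).1)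
            = fun k => ((a (k + N))⁻¹)⁻¹ • ((ws (k + N)).1 - Φ xo) := by
          funext k
          rw [inv_inv]
          rfl
        rw [← heq]
        exact h
      · have h := (continuous_snd.tendsto _).comp hssub
        have heq : (fun k => (a (k + N) • (ws (k + N) - (Φ xo, lmo))).2)
            = fun k => ((a (k + N))⁻¹)⁻¹ • ((ws (k + N)).2 - lmo) := by
          funext k
          rw [inv_inv]
          rfl
        rw [← heq]
        exact h
    · -- a has a bounded subsequence : limit direction vanishes
      rw [Filter.tendsto_atTop] at hA
      push_neg at hA
      obtain ⟨C, hC⟩ := hA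
      have hC' : ∃ᶠ k in atTop, a k < C := by
        have := Filter.not_eventually.mp hC
        exact this.mono fun k hk => not_not.mp hk
      obtain ⟨φ, hφmono, hφlt⟩ := Filter.extraction_of_frequently_atTop hC'
      have hzero : Tendsto (fun k => a (φ k) • (ws (φ k) - (Φ xo, lmo))) atTop
          (𝓝 (0 : Evec m × Evec m)) := by
        have hb : ∀ k, ‖a (φ k) • (ws (φ k) - (Φ xo, lmo))‖
            ≤ C * ‖ws (φ k) - (Φ xo, lmo)‖ := by
          intro k
          rw [norm_smul, Real.norm_eq_abs, abs_of_nonneg (ha0 _)]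
          exact mul_le_mul_of_nonneg_right (le_of_lt (hφlt k)) (norm_nonneg _)
        have hg : Tendsto (fun k => C * ‖ws (φ k) - (Φ xo, lmo)‖) atTop (𝓝 (C * 0)) := by
          refine Tendsto.const_mul C ?_
          have h1 : Tendsto (fun k => ws (φ k)) atTop (𝓝 (Φ xo, lmo)) :=
            hwlim.comp hφmono.tendsto_atTop
          have h2 := (h1.sub_const (Φ xo, lmo)).norm
          simpa using h2
        rw [mul_zero] at hg
        exact squeeze_zero_norm hb hg
      have hlim2 : Tendsto (fun k => a (φ k) • (ws (φ k) - (Φ xo, lmo))) atTop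
          (𝓝 ((fderiv ℝ Φ xo ξ, η) : Evec m × Evec m)) := hslim.comp hφmono.tendsto_atTop
      have heqz : ((fderiv ℝ Φ xo ξ, η) : Evec m × Evec m) = 0 :=
        tendsto_nhds_unique hlim2 hzero
      have hAξ : fderiv ℝ Φ xo ξ = 0 := congrArg Prod.fst heqz
      have hη : η = 0 := congrArg Prod.snd heqz
      have hsub0 : lmo ∈ subdiff (thetaY Y B) (Φ xo) := by
        have h := hkkt.2
        simpa using h
      have ht0 : ∀ k : ℕ, (0:ℝ) < ((k:ℝ) + 1)⁻¹ := fun k => by positivity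
      have htlim : Tendsto (fun k : ℕ => ((k:ℝ) + 1)⁻¹) atTop (𝓝 (0:ℝ)) := by
        have := tendsto_one_div_add_atTop_nhds_zero_nat (𝕜 := ℝ)
        simpa [one_div] using this
      refine main_est Y B φ₀ hφ₀ Φ hΦ xo lmo hkkt ξ η h1 (fun k : ℕ => ((k:ℝ) + 1)⁻¹) ht0 htlim
        (fun _ => Φ xo) (fun _ => lmo) (fun _ => hsub0) ?_ ?_ hic
      · rw [hAξ]
        simpa using (tendsto_const_nhds : Tendsto (fun _ : ℕ => (0 : Evec m)) atTop (𝓝 0))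
      · rw [hη]
        simpa using (tendsto_const_nhds : Tendsto (fun _ : ℕ => (0 : Evec m)) atTop (𝓝 0))
  · -- the implication implies isolated calmness
    intro hker
    by_contra hnc
    rw [IsolCalm] at hnc
    push_neg at hnc
    have hstep : ∀ k : ℕ, ∃ z ∈ Metric.ball ((0,0) : Evec n × Evec m) (1/((k:ℝ)+1)),
        ∃ w ∈ SKKT Y B φ₀ Φ z ∩ Metric.ball ((xo, lmo)) (1/((k:ℝ)+1)),
        (k : ℝ) * ‖z - ((0,0) : Evec n × Evec m)‖ < ‖w - (xo, lmo)‖ := by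
      intro k
      exact hnc k (Nat.cast_nonneg k) _ (Metric.ball_mem_nhds _ (by positivity))
        _ (Metric.ball_mem_nhds _ (by positivity))
    choose p hpball q hq hlt using hstep
    have hr0 : ∀ k, 0 < ‖q k - ((xo, lmo) : Evec n × Evec m)‖ := fun k =>
      lt_of_le_of_lt (by positivity) (hlt k)
    have hqlim : Tendsto q atTop (𝓝 ((xo, lmo) : Evec n × Evec m)) := by
      rw [tendsto_iff_dist_tendsto_zero]
      refine squeeze_zero (fun k => dist_nonneg) (fun k => ?_)
        tendsto_one_div_add_atTop_nhds_zero_nat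
      exact le_of_lt (Metric.mem_ball.mp (hq k).2)
    have hplim : Tendsto p atTop (𝓝 ((0,0) : Evec n × Evec m)) := by
      rw [tendsto_iff_dist_tendsto_zero]
      refine squeeze_zero (fun k => dist_nonneg) (fun k => ?_)
        tendsto_one_div_add_atTop_nhds_zero_nat
      exact le_of_lt (Metric.mem_ball.mp (hpball k))
    have hs : ∀ k, (‖q k - ((xo, lmo) : Evec n × Evec m)‖)⁻¹ • (q k - (xo, lmo))
        ∈ Metric.sphere (0 : Evec n × Evec m) 1 := by
      intro k
      rw [mem_sphere_zero_iff_norm, norm_smul, Real.norm_eq_abs,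
        abs_of_pos (inv_pos.mpr (hr0 k)), inv_mul_cancel₀ (ne_of_gt (hr0 k))]
    obtain ⟨v, hvmem, φ, hφmono, hφconv⟩ :=
      (isCompact_sphere (0 : Evec n × Evec m) 1).tendsto_subseq hs
    have hv1 : ‖v‖ = 1 := mem_sphere_zero_iff_norm.mp hvmem
    have hQlim : Tendsto (fun k => q (φ k)) atTop (𝓝 ((xo, lmo) : Evec n × Evec m)) :=
      hqlim.comp hφmono.tendsto_atTop
    have hsv : Tendsto (fun k => (‖q (φ k) - ((xo, lmo) : Evec n × Evec m)‖)⁻¹ •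
        (q (φ k) - (xo, lmo))) atTop (𝓝 v) := by
      have := hφconv
      simpa [Function.comp_def] using this
    -- a k • p (φ k) → 0
    have hap : Tendsto (fun k => (‖q (φ k) - ((xo, lmo) : Evec n × Evec m)‖)⁻¹ • p (φ k))
        atTop (𝓝 ((0,0) : Evec n × Evec m)) := by
      refine squeeze_zero_norm' ?_ tendsto_one_div_atTop_nhds_zero_nat
      rw [eventually_atTop]
      refine ⟨1, fun k hk => ?_⟩
      have hk0 : (0:ℝ) < (k:ℝ) := by exact_mod_cast hk
      have hφk : (k:ℝ) ≤ ((φ k : ℕ) : ℝ) := by exact_mod_cast hφmono.le_apply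
      have hlt' := hlt (φ k)
      have h1 : (k:ℝ) * ‖p (φ k) - ((0,0) : Evec n × Evec m)‖
          ≤ ‖q (φ k) - ((xo, lmo) : Evec n × Evec m)‖ :=
        le_of_lt (lt_of_le_of_lt (mul_le_mul_of_nonneg_right hφk (norm_nonneg _)) hlt')
      rw [Prod.mk_zero_zero, sub_zero] at h1
      rw [norm_smul, Real.norm_eq_abs, abs_of_pos (inv_pos.mpr (hr0 (φ k)))]
      rw [le_div_iff₀ hk0]
      have h2 := mul_le_mul_of_nonneg_left h1
        (le_of_lt (inv_pos.mpr (hr0 (φ k))))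
      rw [inv_mul_cancel₀ (ne_of_gt (hr0 (φ k)))] at h2
      nlinarith [h2]
    obtain ⟨D, hD, hDval⟩ := Gmap_deriv Y B φ₀ Φ hφ₀ hΦ xo lmo
    have hG0 : Gmap φ₀ Φ (xo, lmo) = 0 := by
      have h := hkkt.1
      rwa [grad_Lag_eq B φ₀ hφ₀ Φ hΦ xo lmo] at h
    have hGlim : Tendsto (fun k => (‖q (φ k) - ((xo, lmo) : Evec n × Evec m)‖)⁻¹ •
        (Gmap φ₀ Φ (q (φ k)) - Gmap φ₀ Φ (xo, lmo))) atTop (𝓝 (D v)) :=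
      deriv_limit hD hQlim hsv
    have hGp : (fun k => (‖q (φ k) - ((xo, lmo) : Evec n × Evec m)‖)⁻¹ •
        (Gmap φ₀ Φ (q (φ k)) - Gmap φ₀ Φ (xo, lmo)))
        = fun k => ((‖q (φ k) - ((xo, lmo) : Evec n × Evec m)‖)⁻¹ • p (φ k)).1 := by
      funext k
      rw [hG0, sub_zero, Prod.smul_fst]
      congr 1
      have hmem1 := (hq (φ k)).1.1
      rw [← hmem1, grad_Lag_eq B φ₀ hφ₀ Φ hΦ]
    have hfst : Tendsto (fun k => ((‖q (φ k) - ((xo, lmo) : Evec n × Evec m)‖)⁻¹ •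
        p (φ k)).1) atTop (𝓝 (0 : Evec n)) := by
      have h := (continuous_fst.tendsto ((0,0) : Evec n × Evec m)).comp hap
      simpa [Function.comp_def] using h
    have hDv0 : D v = 0 := by
      rw [hGp] at hGlim
      exact tendsto_nhds_unique hGlim hfst
    have hkereq : hessL B φ₀ Φ xo lmo v.1
        + ContinuousLinearMap.adjoint (fderiv ℝ Φ xo) v.2 = 0 := by
      rw [← hDval v.1 v.2]
      rw [Prod.mk.eta]
      exact hDv0
    -- graphical derivative membership
    have hΦd : HasFDerivAt Φ (fderiv ℝ Φ xo) xo :=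
      (hΦ.differentiable two_ne_zero xo).hasFDerivAt
    have hQ1lim : Tendsto (fun k => (q (φ k)).1) atTop (𝓝 xo) := by
      have h := (continuous_fst.tendsto ((xo, lmo) : Evec n × Evec m)).comp hQlim
      simpa [Function.comp_def] using h
    have hQ2lim : Tendsto (fun k => (q (φ k)).2) atTop (𝓝 lmo) := by
      have h := (continuous_snd.tendsto ((xo, lmo) : Evec n × Evec m)).comp hQlim
      simpa [Function.comp_def] using h
    have hsv1 : Tendsto (fun k => (‖q (φ k) - ((xo, lmo) : Evec n × Evec m)‖)⁻¹ •
        ((q (φ k)).1 - xo)) atTop (𝓝 v.1) := by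
      have h := (continuous_fst.tendsto v).comp hsv
      refine h.congr fun k => ?_
      simp [Prod.smul_fst, Prod.fst_sub]
    have hsv2 : Tendsto (fun k => (‖q (φ k) - ((xo, lmo) : Evec n × Evec m)‖)⁻¹ •
        ((q (φ k)).2 - lmo)) atTop (𝓝 v.2) := by
      have h := (continuous_snd.tendsto v).comp hsv
      refine h.congr fun k => ?_
      simp [Prod.smul_snd, Prod.snd_sub]
    have hap2 : Tendsto (fun k => (‖q (φ k) - ((xo, lmo) : Evec n × Evec m)‖)⁻¹ •
        (p (φ k)).2) atTop (𝓝 (0 : Evec m)) := by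
      have h := (continuous_snd.tendsto ((0,0) : Evec n × Evec m)).comp hap
      refine Tendsto.congr (fun k => ?_) (by simpa using h)
      simp [Prod.smul_snd]
    have hp2lim : Tendsto (fun k => (p (φ k)).2) atTop (𝓝 (0 : Evec m)) := by
      have h := (continuous_snd.tendsto ((0,0) : Evec n × Evec m)).comp
        (hplim.comp hφmono.tendsto_atTop)
      simpa [Function.comp_def] using h
    have hΦQ : Tendsto (fun k => (‖q (φ k) - ((xo, lmo) : Evec n × Evec m)‖)⁻¹ •
        (Φ ((q (φ k)).1) - Φ xo)) atTop (𝓝 (fderiv ℝ Φ xo v.1)) :=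
      deriv_limit hΦd hQ1lim hsv1
    have hmemgD : v.2 ∈ gDeriv (subdiff (thetaY Y B)) (Φ xo) lmo (fderiv ℝ Φ xo v.1) := by
      refine ⟨fun k => (Φ ((q (φ k)).1) + (p (φ k)).2, (q (φ k)).2),
        fun k => (‖q (φ k) - ((xo, lmo) : Evec n × Evec m)‖)⁻¹,
        fun k => (hq (φ k)).1.2, fun k => le_of_lt (inv_pos.mpr (hr0 (φ k))), ?_, ?_⟩
      · have h1 : Tendsto (fun k => Φ ((q (φ k)).1) + (p (φ k)).2) atTop (𝓝 (Φ xo)) := by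
          have hc : Tendsto (fun k => Φ ((q (φ k)).1)) atTop (𝓝 (Φ xo)) :=
            (hΦ.continuous.tendsto xo).comp hQ1lim
          simpa using hc.add hp2lim
        exact h1.prodMk_nhds hQ2lim
      · have h1 : Tendsto (fun k => (‖q (φ k) - ((xo, lmo) : Evec n × Evec m)‖)⁻¹ •
            (Φ ((q (φ k)).1) + (p (φ k)).2 - Φ xo)) atTop (𝓝 (fderiv ℝ Φ xo v.1)) := by
          have heq : (fun k => (‖q (φ k) - ((xo, lmo) : Evec n × Evec m)‖)⁻¹ •
              (Φ ((q (φ k)).1) + (p (φ k)).2 - Φ xo))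
              = fun k => (‖q (φ k) - ((xo, lmo) : Evec n × Evec m)‖)⁻¹ •
                (Φ ((q (φ k)).1) - Φ xo) + (‖q (φ k) - ((xo, lmo) : Evec n × Evec m)‖)⁻¹ •
                (p (φ k)).2 := by
            funext k
            rw [← smul_add]
            congr 1
            abel
          rw [heq]
          simpa using hΦQ.add hap2
        have h2 : (fun k => (‖q (φ k) - ((xo, lmo) : Evec n × Evec m)‖)⁻¹ •
            ((Φ ((q (φ k)).1) + (p (φ k)).2, (q (φ k)).2) - ((Φ xo, lmo) : Evec m × Evec m)))
            = fun k => ((‖q (φ k) - ((xo, lmo) : Evec n × Evec m)‖)⁻¹ •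
              (Φ ((q (φ k)).1) + (p (φ k)).2 - Φ xo),
              (‖q (φ k) - ((xo, lmo) : Evec n × Evec m)‖)⁻¹ • ((q (φ k)).2 - lmo)) := by
          funext k
          rfl
        rw [h2]
        exact h1.prodMk_nhds hsv2
    have hv0 := hker v.1 v.2 ⟨hkereq, hmemgD⟩
    have : v = 0 := Prod.ext hv0.1 hv0.2
    rw [this, norm_zero] at hv1
    exact zero_ne_one hv1
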